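/- arXiv:1912.07158 — 2 statements merged into one kernel-verified Lean document; each statement's English description precedes it below -/
import Mathlib

section
/- Let A be a unital C*-algebra and u, e self-adjoint unitaries in A such that u − e is invertible. Then y = e(u + e)(u − e)⁻¹ satisfies y* = y, ey = −ye, and 1 + y² = 4(u − e)⁻². -/
/-- Graded inverse Cayley transform: for self-adjoint unitaries `u, e` with
`u - e` invertible, `y = e(u + e)(u - e)⁻¹` satisfies `y* = y`, `ey = -ye` and
`1 + y² = 4(u - e)⁻²`. -/
theorem graded_inverse_cayley_properties {A : Type*} [CStarAlgebra A] (u e : A)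
    (hu : IsSelfAdjoint u) (hu2 : u * u = 1)
    (he : IsSelfAdjoint e) (he2 : e * e = 1) (h : IsUnit (u - e)) :
    star (e * (u + e) * Ring.inverse (u - e)) = e * (u + e) * Ring.inverse (u - e) ∧
      e * (e * (u + e) * Ring.inverse (u - e))
        = -((e * (u + e) * Ring.inverse (u - e)) * e) ∧
      1 + (e * (u + e) * Ring.inverse (u - e)) ^ 2 = 4 * (Ring.inverse (u - e)) ^ 2 := by
  set v := Ring.inverse (u - e) with hv
  have hv1 : (u - e) * v = 1 := Ring.mul_inverse_cancel _ h
  have hv2 : v * (u - e) = 1 := Ring.inverse_mul_cancel _ h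
  have hstar : star (u - e) = u - e := by rw [star_sub, hu.star_eq, he.star_eq]
  have hvstar : star v = v := by
    have h1 : star v * (u - e) = 1 := by
      rw [← hstar, ← star_mul, hv1, star_one]
    calc star v = star v * ((u - e) * v) := by rw [hv1, mul_one]
      _ = (star v * (u - e)) * v := by rw [mul_assoc]
      _ = v := by rw [h1, one_mul]
  -- conjugation lemma
  have conj : ∀ X Y : A, X * (u - e) = -((u - e) * Y) → v * X = -(Y * v) := by
    intro X Y hXY
    calc v * X = v * (X * ((u - e) * v)) := by rw [hv1, mul_one]
      _ = v * (X * (u - e)) * v := by noncomm_ring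
      _ = v * (-((u - e) * Y)) * v := by rw [hXY]
      _ = -((v * (u - e)) * (Y * v)) := by noncomm_ring
      _ = -(Y * v) := by rw [hv2, one_mul]
  have hB : e * (u - e) = -((u - e) * u) := by
    rw [mul_sub, sub_mul, he2, hu2, neg_sub]
  have hC : (u + e) * (u - e) = -((u - e) * (u + e)) := by
    simp only [mul_sub, sub_mul, mul_add, add_mul, hu2, he2]
    noncomm_ring
  have hve : v * e = -(u * v) := conj e u hB
  have hvs : v * (u + e) = -((u + e) * v) := conj (u + e) (u + e) hC
  have hE : e * (u + e) = (u + e) * u := by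
    simp only [mul_add, add_mul, hu2, he2]
    exact add_comm _ _
  -- part 1 : self-adjointness
  have part1 : star (e * (u + e) * v) = e * (u + e) * v := by
    calc star (e * (u + e) * v)
        = star v * (star (u + e) * star e) := by rw [star_mul, star_mul]
      _ = v * ((u + e) * e) := by
          rw [hvstar, star_add, hu.star_eq, he.star_eq]
      _ = (v * (u + e)) * e := by rw [mul_assoc]
      _ = (-((u + e) * v)) * e := by rw [hvs]
      _ = -((u + e) * (v * e)) := by noncomm_ring
      _ = -((u + e) * (-(u * v))) := by rw [hve]
      _ = ((u + e) * u) * v := by noncomm_ring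
      _ = (e * (u + e)) * v := by rw [hE]
  -- part 2 : anticommutation
  have part2 : e * (e * (u + e) * v) = -((e * (u + e) * v) * e) := by
    have lhs : e * (e * (u + e) * v) = (u + e) * v := by
      calc e * (e * (u + e) * v) = (e * e) * ((u + e) * v) := by noncomm_ring
        _ = (u + e) * v := by rw [he2, one_mul]
    have rhs : (e * (u + e) * v) * e = -((u + e) * v) := by
      calc (e * (u + e) * v) * e = (e * (u + e)) * (v * e) := by rw [mul_assoc]
        _ = (e * (u + e)) * (-(u * v)) := by rw [hve]
        _ = ((u + e) * u) * (-(u * v)) := by rw [hE]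
        _ = -((u + e) * ((u * u) * v)) := by noncomm_ring
        _ = -((u + e) * v) := by rw [hu2, one_mul]
    rw [lhs, rhs, neg_neg]
  -- part 3 : the square
  have h2 : (2 : A) = 1 + 1 := by norm_num
  have h5 : (u - e) * (u - e) = 2 - (u * e + e * u) := by
    rw [h2]
    simp only [mul_sub, sub_mul, hu2, he2]
    noncomm_ring
  have h4 : (e * (u + e)) * (u * ((u + e) * (v * v)))
      = (4 - (u - e) * (u - e)) * (v * v) := by
    have expand : (e * (u + e)) * (u * (u + e)) = 4 - (u - e) * (u - e) := by
      have hu2' : ∀ x : A, u * (u * x) = x := fun x => by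
        rw [← mul_assoc, hu2, one_mul]
      have he2' : ∀ x : A, e * (e * x) = x := fun x => by
        rw [← mul_assoc, he2, one_mul]
      have h4 : (4 : A) = 1 + 1 + 1 + 1 := by norm_num
      rw [h5, h4, h2]
      simp only [mul_add, add_mul, mul_assoc, hu2', he2', hu2, he2, one_mul, mul_one]
      noncomm_ring
    calc (e * (u + e)) * (u * ((u + e) * (v * v)))
        = ((e * (u + e)) * (u * (u + e))) * (v * v) := by noncomm_ring
      _ = (4 - (u - e) * (u - e)) * (v * v) := by rw [expand]
  have hsq1 : (u - e) * (u - e) * (v * v) = 1 := by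
    calc (u - e) * (u - e) * (v * v) = (u - e) * (((u - e) * v) * v) := by noncomm_ring
      _ = 1 := by rw [hv1, one_mul, hv1]
  have part3 : 1 + (e * (u + e) * v) ^ 2 = 4 * v ^ 2 := by
    have hy2 : (e * (u + e) * v) ^ 2
        = (e * (u + e)) * (u * ((u + e) * (v * v))) := by
      calc (e * (u + e) * v) ^ 2
          = (e * (u + e)) * ((v * e) * ((u + e) * v)) := by rw [sq]; noncomm_ring
        _ = (e * (u + e)) * ((-(u * v)) * ((u + e) * v)) := by rw [hve]
        _ = -((e * (u + e)) * (u * ((v * (u + e)) * v))) := by noncomm_ring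
        _ = -((e * (u + e)) * (u * ((-((u + e) * v)) * v))) := by rw [hvs]
        _ = (e * (u + e)) * (u * ((u + e) * (v * v))) := by noncomm_ring
    rw [hy2, h4, sub_mul, hsq1, sq]
    noncomm_ring
  exact ⟨part1, part2, part3⟩
end

section
/- Let A be a unital C*-algebra and a ∈ A self-adjoint. In M₂(A), set T = [[0, −ia], [ia, 0]] and e = [[0, 1], [1, 0]]. Then e·(T + e)·(T − e)⁻¹ = [[0, C(a)*], [C(a), 0]], where C(a) = (a + i)(a − i)⁻¹ is the ungraded Cayley transform of a. -/
open Complex in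
lemma isUnit_sub_smul_I {A : Type*} [CStarAlgebra A] (a : A) (ha : IsSelfAdjoint a) :
    IsUnit (a - Complex.I • (1 : A)) := by
  have h : (Complex.I) ∉ spectrum ℂ a := by
    intro h
    have := ha.mem_spectrum_eq_re h
    simp [Complex.ext_iff] at this
  rw [spectrum.notMem_iff] at h
  rw [Algebra.algebraMap_eq_smul_one] at h
  simpa [neg_sub] using h.neg

open Complex in
lemma isUnit_add_smul_I {A : Type*} [CStarAlgebra A] (a : A) (ha : IsSelfAdjoint a) :
    IsUnit (a + Complex.I • (1 : A)) := by
  have h : (-Complex.I) ∉ spectrum ℂ a := by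
    intro h
    have := ha.mem_spectrum_eq_re h
    simp [Complex.ext_iff] at this
  rw [spectrum.notMem_iff, Algebra.algebraMap_eq_smul_one] at h
  simpa [sub_eq_add_neg, neg_smul, add_comm] using h.neg

/-- The graded Cayley transform of `T = [[0, -ia], [ia, 0]]` relative to
`e = [[0,1],[1,0]]` is the off-diagonal matrix of the ungraded Cayley
transform of `a` and its adjoint. -/
theorem graded_cayley_of_ungraded {A : Type*} [CStarAlgebra A] (a : A)
    (ha : IsSelfAdjoint a) :
    let T : Matrix (Fin 2) (Fin 2) A := !![0, -(Complex.I • a); Complex.I • a, 0]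
    let e : Matrix (Fin 2) (Fin 2) A := !![0, 1; 1, 0]
    e * (T + e) * Ring.inverse (T - e) =
      !![0, (a - Complex.I • (1 : A)) * Ring.inverse (a + Complex.I • (1 : A));
         (a + Complex.I • (1 : A)) * Ring.inverse (a - Complex.I • (1 : A)), 0] := by
  intro T e
  obtain ⟨u, hu⟩ := isUnit_sub_smul_I a ha
  obtain ⟨v, hv⟩ := isUnit_add_smul_I a ha
  have hru : Ring.inverse (a - Complex.I • (1:A)) = ↑u⁻¹ := by rw [← hu, Ring.inverse_unit]
  have hrv : Ring.inverse (a + Complex.I • (1:A)) = ↑v⁻¹ := by rw [← hv, Ring.inverse_unit]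
  set M : Matrix (Fin 2) (Fin 2) A :=
    !![0, -(Complex.I • (↑v⁻¹ : A)); Complex.I • (↑u⁻¹ : A), 0] with hM
  have key1 : -(Complex.I • a) - 1 = (-Complex.I) • (u : A) := by
    rw [hu]; simp [smul_sub, smul_smul, Complex.I_mul_I, neg_smul]
  have key2 : Complex.I • a - 1 = Complex.I • (v : A) := by
    rw [hv]; simp [smul_add, smul_smul, Complex.I_mul_I, sub_eq_add_neg, neg_smul]
  have uu : (u : A) * ↑u⁻¹ = 1 := u.mul_inv
  have uu' : (↑u⁻¹ : A) * u = 1 := u.inv_mul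
  have vv : (v : A) * ↑v⁻¹ = 1 := v.mul_inv
  have vv' : (↑v⁻¹ : A) * v = 1 := v.inv_mul
  have hTe : T - e = !![0, (-Complex.I) • (u : A); Complex.I • (v : A), 0] := by
    ext i j
    fin_cases i <;> fin_cases j <;>
      simp [T, e, ← key1, ← key2, sub_eq_add_neg]
  have h1 : (T - e) * M = 1 := by
    rw [hTe, hM, Matrix.mul_fin_two, Matrix.one_fin_two]
    simp [smul_smul, mul_smul_comm, smul_mul_assoc, Complex.I_mul_I, uu, vv]
  have h2 : M * (T - e) = 1 := by
    rw [hTe, hM, Matrix.mul_fin_two, Matrix.one_fin_two]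
    simp [smul_smul, mul_smul_comm, smul_mul_assoc, Complex.I_mul_I, uu', vv']
  have hinv : Ring.inverse (T - e) = M := by
    have := Ring.inverse_unit ⟨T - e, M, h1, h2⟩
    simpa using this
  rw [hinv, hru, hrv]
  have hTpe : e * (T + e) = !![Complex.I • (u : A), 0; 0, (-Complex.I) • (v : A)] := by
    ext i j
    fin_cases i <;> fin_cases j <;>
      simp [T, e, Matrix.mul_apply, Fin.sum_univ_two, hu, hv, smul_sub, smul_add,
        smul_smul, Complex.I_mul_I, neg_smul, sub_eq_add_neg]
  rw [hTpe, hM, Matrix.mul_fin_two, ← hu, ← hv]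
  congr 1 <;>
    simp [smul_smul, mul_smul_comm, smul_mul_assoc, Complex.I_mul_I]
end
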